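/- Let R be a commutative G-graded ring. The intersection graph Gr_G(R) of graded ideals is disconnected if and only if R is isomorphic (as a graded ring) to a direct product R₁ × R₂ of two G-graded fields. -/

import Mathlib

variable {G R : Type*} [AddGroup G] [DecidableEq G] [CommRing R]

/-- The set of proper nontrivial `G`-graded ideals of `R`. -/
def hV (𝒜 : G → AddSubgroup R) [GradedRing 𝒜] : Set (Ideal R) :=
  {I | I ≠ ⊥ ∧ I ≠ ⊤ ∧ Ideal.IsHomogeneous 𝒜 I}

/-- The intersection graph on a set of ideals: two distinct ideals are
adjacent iff their intersection is nonzero. -/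
def interGraph (V : Set (Ideal R)) : SimpleGraph V where
  Adj I J := I ≠ J ∧ (I : Ideal R) ⊓ (J : Ideal R) ≠ ⊥
  symm := ⟨fun I J ⟨h1, h2⟩ => ⟨h1.symm, by rwa [inf_comm] at h2⟩⟩
  loopless := ⟨fun I ⟨h1, _⟩ => h1 rfl⟩

/-- A nonzero element has a nonzero homogeneous component. -/
lemma exists_ne_zero_component (𝒜 : G → AddSubgroup R) [GradedRing 𝒜] {z : R} (hz : z ≠ 0) :
    ∃ g, (DirectSum.decompose 𝒜 z g : R) ≠ 0 := by
  classical
  by_contra h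
  push_neg at h
  apply hz
  rw [← DirectSum.sum_support_decompose 𝒜 z]
  exact Finset.sum_eq_zero fun g _ => h g

/-- If `K` is a nonzero graded ideal contained in `I`, and `R/J` is a graded field
with `I ⊓ J = ⊥`, then `I ≤ K`. -/
lemma le_of_graded_field (𝒜 : G → AddSubgroup R) [GradedRing 𝒜] {I J K : Ideal R}
    (hK : Ideal.IsHomogeneous 𝒜 K) (hKbot : K ≠ ⊥) (hKI : K ≤ I) (hIJ : I ⊓ J = ⊥)
    (hfield : ∀ (g : G), ∀ a ∈ 𝒜 g, a ∉ J → ∃ b : R, b * a - 1 ∈ J) : I ≤ K := by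
  obtain ⟨z, hzK, hz⟩ := (Submodule.ne_bot_iff K).mp hKbot
  obtain ⟨g, hg⟩ := exists_ne_zero_component 𝒜 hz
  set a : R := (DirectSum.decompose 𝒜 z g : R) with ha
  have haK : a ∈ K := hK g hzK
  have haJ : a ∉ J := by
    intro haJ
    apply hg
    have : a ∈ I ⊓ J := ⟨hKI haK, haJ⟩
    rw [hIJ] at this
    exact (Submodule.mem_bot R).mp this
  obtain ⟨c, hc⟩ := hfield g a (SetLike.coe_mem _) haJ
  intro x hxI
  have h1 : x * (c * a - 1) ∈ I ⊓ J :=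
    ⟨Ideal.mul_mem_right _ _ hxI, Ideal.mul_mem_left _ _ hc⟩
  rw [hIJ] at h1
  have h2 : x * (c * a - 1) = 0 := (Submodule.mem_bot R).mp h1
  have h3 : x = x * c * a := by linear_combination -h2
  rw [h3]
  exact Ideal.mul_mem_left K (x * c) haK

/-- If `u, v` are unreachable vertices, no vertex can be adjacent to both. -/
lemma no_middle (𝒜 : G → AddSubgroup R) [GradedRing 𝒜] (u v : ↥(hV 𝒜))
    (huv : ¬ (interGraph (hV 𝒜)).Reachable u v)
    (M : Ideal R) (hM : M ∈ hV 𝒜) (h1 : (u : Ideal R) ⊓ M ≠ ⊥) (h2 : M ⊓ (v : Ideal R) ≠ ⊥)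
    (hMu : M ≠ (u : Ideal R)) (hMv : M ≠ (v : Ideal R)) : False := by
  apply huv
  have a1 : (interGraph (hV 𝒜)).Adj u ⟨M, hM⟩ :=
    ⟨fun h => hMu (congrArg Subtype.val h).symm, h1⟩
  have a2 : (interGraph (hV 𝒜)).Adj ⟨M, hM⟩ v :=
    ⟨fun h => hMv (congrArg Subtype.val h), h2⟩
  exact a1.reachable.trans a2.reachable

/-- If `u, v` are unreachable vertices with `u ⊓ v = ⊥`, then `u ⊔ v = ⊤`. -/
lemma sup_eq_top_of_unreachable (𝒜 : G → AddSubgroup R) [GradedRing 𝒜] (u v : ↥(hV 𝒜))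
    (huv : ¬ (interGraph (hV 𝒜)).Reachable u v) (hinf : (u : Ideal R) ⊓ v = ⊥) :
    (u : Ideal R) ⊔ v = ⊤ := by
  obtain ⟨huB, huT, huH⟩ := u.2
  obtain ⟨hvB, hvT, hvH⟩ := v.2
  by_contra hsup
  refine no_middle 𝒜 u v huv ((u : Ideal R) ⊔ v) ⟨?_, hsup, huH.sup hvH⟩ ?_ ?_ ?_ ?_
  · intro h
    exact huB (le_bot_iff.mp (h ▸ le_sup_left))
  · rwa [inf_eq_left.mpr le_sup_left]
  · rwa [inf_eq_right.mpr le_sup_right]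
  · intro h
    apply hvB
    have hvu : (v : Ideal R) ≤ u := h ▸ le_sup_right
    rw [← le_bot_iff, ← hinf]
    exact le_inf hvu le_rfl
  · intro h
    apply huB
    have huv' : (u : Ideal R) ≤ v := h ▸ le_sup_left
    rw [← le_bot_iff, ← hinf]
    exact le_inf le_rfl huv'

/-- If `u, v` are unreachable vertices with `u ⊓ v = ⊥` and `u ⊔ v = ⊤`,
then `R/u` is a graded field. -/
lemma graded_field_of_unreachable (𝒜 : G → AddSubgroup R) [GradedRing 𝒜] (u v : ↥(hV 𝒜))
    (huv : ¬ (interGraph (hV 𝒜)).Reachable u v) (hinf : (u : Ideal R) ⊓ v = ⊥)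
    (hsup : (u : Ideal R) ⊔ v = ⊤) :
    ∀ (g : G), ∀ a ∈ 𝒜 g, a ∉ (u : Ideal R) → ∃ b : R, b * a - 1 ∈ (u : Ideal R) := by
  obtain ⟨huB, huT, huH⟩ := u.2
  obtain ⟨hvB, hvT, hvH⟩ := v.2
  intro g a hag hau
  by_cases hMtop : (u : Ideal R) ⊔ Ideal.span {a} = ⊤
  · have h1 : (1 : R) ∈ (u : Ideal R) ⊔ Ideal.span {a} := hMtop ▸ Submodule.mem_top
    rw [Submodule.mem_sup] at h1
    obtain ⟨i, hi, x, hx, hix⟩ := h1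
    rw [Ideal.mem_span_singleton'] at hx
    obtain ⟨b, rfl⟩ := hx
    refine ⟨b, ?_⟩
    have : b * a - 1 = -i := by linear_combination hix
    rw [this]
    exact neg_mem hi
  · exfalso
    have hspanH : (Ideal.span {a}).IsHomogeneous 𝒜 :=
      Ideal.homogeneous_span 𝒜 {a} (fun x hx => ⟨g, by rwa [Set.mem_singleton_iff.mp hx]⟩)
    have haM : a ∈ (u : Ideal R) ⊔ Ideal.span {a} :=
      Submodule.mem_sup_right (Ideal.subset_span (Set.mem_singleton a))
    refine no_middle 𝒜 u v huv ((u : Ideal R) ⊔ Ideal.span {a})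
      ⟨?_, hMtop, huH.sup hspanH⟩ ?_ ?_ ?_ ?_
    · intro h
      exact huB (le_bot_iff.mp (h ▸ le_sup_left))
    · rwa [inf_eq_left.mpr le_sup_left]
    · -- M ⊓ v ≠ ⊥ : write a = i + j, then j = a - i ∈ M ⊓ v and j ≠ 0
      have haT : a ∈ (u : Ideal R) ⊔ v := hsup ▸ Submodule.mem_top
      rw [Submodule.mem_sup] at haT
      obtain ⟨i, hi, j, hj, hij⟩ := haT
      rw [Submodule.ne_bot_iff]
      refine ⟨j, ⟨?_, hj⟩, ?_⟩
      · have : j = a - i := by linear_combination hij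
        rw [this]
        exact sub_mem haM (Submodule.mem_sup_left hi)
      · intro h
        apply hau
        rw [h, add_zero] at hij
        rw [← hij]
        exact hi
    · intro h
      exact hau (h ▸ haM)
    · intro h
      apply huB
      have huv' : (u : Ideal R) ≤ v := h ▸ le_sup_left
      rw [← le_bot_iff, ← hinf]
      exact le_inf le_rfl huv'

theorem stmt2 (𝒜 : G → AddSubgroup R) [GradedRing 𝒜] [Nontrivial R] :
    ¬ (interGraph (hV 𝒜)).Preconnected ↔
      ∃ I J : Ideal R, Ideal.IsHomogeneous 𝒜 I ∧ Ideal.IsHomogeneous 𝒜 J ∧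
        I ⊓ J = ⊥ ∧ I ⊔ J = ⊤ ∧ I ≠ ⊤ ∧ J ≠ ⊤ ∧
        (∀ (g : G), ∀ a ∈ 𝒜 g, a ∉ I → ∃ b : R, b * a - 1 ∈ I) ∧
        (∀ (g : G), ∀ a ∈ 𝒜 g, a ∉ J → ∃ b : R, b * a - 1 ∈ J) := by
  classical
  constructor
  · -- forward direction
    intro h
    rw [SimpleGraph.Preconnected] at h
    push_neg at h
    obtain ⟨u, v, huv⟩ := h
    obtain ⟨huB, huT, huH⟩ := u.2
    obtain ⟨hvB, hvT, hvH⟩ := v.2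
    have hne' : u ≠ v := fun h => huv (h ▸ SimpleGraph.Reachable.refl u)
    have hinf : (u : Ideal R) ⊓ v = ⊥ := by
      by_contra hi
      exact huv (SimpleGraph.Adj.reachable ⟨hne', hi⟩)
    have hsup : (u : Ideal R) ⊔ v = ⊤ := sup_eq_top_of_unreachable 𝒜 u v huv hinf
    have huv' : ¬ (interGraph (hV 𝒜)).Reachable v u := fun h => huv h.symm
    have hinf' : (v : Ideal R) ⊓ u = ⊥ := by rwa [inf_comm] at hinf
    have hsup' : (v : Ideal R) ⊔ u = ⊤ := by rwa [sup_comm] at hsup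
    exact ⟨u, v, huH, hvH, hinf, hsup, huT, hvT,
      graded_field_of_unreachable 𝒜 u v huv hinf hsup,
      graded_field_of_unreachable 𝒜 v u huv' hinf' hsup'⟩
  · -- reverse direction
    rintro ⟨I, J, hIH, hJH, hIJ, hIJT, hIT, hJT, hIf, hJf⟩
    have hIb : I ≠ ⊥ := by
      intro h
      rw [h, bot_sup_eq] at hIJT
      exact hJT hIJT
    have hJb : J ≠ ⊥ := by
      intro h
      rw [h, sup_bot_eq] at hIJT
      exact hIT hIJT
    -- every vertex is I or J
    have classify : ∀ K : Ideal R, K ∈ hV 𝒜 → K = I ∨ K = J := by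
      rintro K ⟨hKb, hKt, hKH⟩
      -- every homogeneous element of K lies in I or J
      have hdich : ∀ (g : G), ∀ a ∈ 𝒜 g, a ∈ K → a ∈ I ∨ a ∈ J := by
        intro g a hag haK
        by_contra hcon
        push_neg at hcon
        obtain ⟨haI, haJ⟩ := hcon
        obtain ⟨b, hb⟩ := hIf g a hag haI
        obtain ⟨c, hc⟩ := hJf g a hag haJ
        have hprod : (b * a - 1) * (c * a - 1) ∈ I ⊓ J :=
          ⟨Ideal.mul_mem_right _ _ hb, Ideal.mul_mem_left _ _ hc⟩
        rw [hIJ] at hprod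
        have hprod0 : (b * a - 1) * (c * a - 1) = 0 := (Submodule.mem_bot R).mp hprod
        apply hKt
        rw [Ideal.eq_top_iff_one]
        have : (1 : R) = (b + c - b * c * a) * a := by linear_combination hprod0
        rw [this]
        exact Ideal.mul_mem_left K _ haK
      -- from x ∈ K, x ∉ L get a homogeneous element of K not in L
      have comp : ∀ (L : Ideal R) (x : R), x ∈ K → x ∉ L →
          ∃ g, (DirectSum.decompose 𝒜 x g : R) ∈ K ∧ (DirectSum.decompose 𝒜 x g : R) ∉ L := by
        intro L x hxK hxL
        by_contra hc
        push_neg at hc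
        apply hxL
        rw [← DirectSum.sum_support_decompose 𝒜 x]
        exact Ideal.sum_mem L fun g _ => hc g (hKH g hxK)
      -- K ≤ I or K ≤ J
      have hle : K ≤ I ∨ K ≤ J := by
        by_contra hcon
        push_neg at hcon
        obtain ⟨hnI, hnJ⟩ := hcon
        obtain ⟨x, hxK, hxI⟩ := SetLike.not_le_iff_exists.mp hnI
        obtain ⟨y, hyK, hyJ⟩ := SetLike.not_le_iff_exists.mp hnJ
        obtain ⟨g, hgK, hgI⟩ := comp I x hxK hxI
        obtain ⟨h', hhK, hhJ⟩ := comp J y hyK hyJ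
        set p : R := (DirectSum.decompose 𝒜 x g : R) with hp
        set q : R := (DirectSum.decompose 𝒜 y h' : R) with hq
        have hpJ : p ∈ J := ((hdich g p (SetLike.coe_mem _) hgK).resolve_left hgI)
        have hqI : q ∈ I := ((hdich h' q (SetLike.coe_mem _) hhK).resolve_right hhJ)
        obtain ⟨b, hb⟩ := hIf g p (SetLike.coe_mem _) hgI
        obtain ⟨c, hc⟩ := hJf h' q (SetLike.coe_mem _) hhJ
        -- s = b*p + c*q ∈ K and s = 1
        have hsK : b * p + c * q ∈ K :=
          Ideal.add_mem K (Ideal.mul_mem_left K b hgK) (Ideal.mul_mem_left K c hhK)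
        have hs1 : b * p + c * q - 1 ∈ I ⊓ J := by
          constructor
          · have : b * p + c * q - 1 = (b * p - 1) + c * q := by ring
            rw [this]
            exact Ideal.add_mem I hb (Ideal.mul_mem_left I c hqI)
          · have : b * p + c * q - 1 = b * p + (c * q - 1) := by ring
            rw [this]
            exact Ideal.add_mem J (Ideal.mul_mem_left J b hpJ) hc
        rw [hIJ] at hs1
        have hs0 : b * p + c * q - 1 = 0 := (Submodule.mem_bot R).mp hs1
        apply hKt
        rw [Ideal.eq_top_iff_one]
        have : (1 : R) = b * p + c * q := by linear_combination -hs0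
        rw [this]
        exact hsK
      rcases hle with hle | hle
      · exact Or.inl (le_antisymm hle (le_of_graded_field 𝒜 hKH hKb hle hIJ hJf))
      · refine Or.inr (le_antisymm hle (le_of_graded_field 𝒜 hKH hKb hle ?_ hIf))
        rwa [inf_comm]
    have hIV : I ∈ hV 𝒜 := ⟨hIb, hIT, hIH⟩
    have hJV : J ∈ hV 𝒜 := ⟨hJb, hJT, hJH⟩
    intro hpre
    obtain ⟨w⟩ := hpre ⟨I, hIV⟩ ⟨J, hJV⟩
    have key : ∀ (x y : ↥(hV 𝒜)), (interGraph (hV 𝒜)).Walk x y →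
        (x : Ideal R) = I → (y : Ideal R) = J → False := by
      intro x y w
      induction w with
      | nil =>
        intro h1 h2
        apply hIb
        rw [← hIJ, ← h1, ← h2, inf_idem]
      | @cons x' b y' hadj p ih =>
        intro h1 _
        rcases classify b b.2 with hb | hb
        · exact hadj.1 (Subtype.ext (h1.trans hb.symm))
        · apply hadj.2
          rw [h1, hb, hIJ]
    exact key _ _ w rfl rfl
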